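/- Let K ⊂ ℝⁿ be a compact convex o-symmetric body with nonempty interior and Λ a full-rank lattice. Then the number of points of Λ in K is at most (2/λ₁(K,Λ) + 1)ⁿ, where λ₁(K,Λ) is the first successive minimum. -/

import Mathlib

open MeasureTheory Set Pointwise

/-- The lattice generated by the vectors `b`. -/
noncomputable def lat {n : ℕ} (b : Fin n → (Fin n → ℝ)) : Set (Fin n → ℝ) :=
  (Submodule.span ℤ (Set.range b) : Submodule ℤ (Fin n → ℝ))

/-- The determinant (covolume) of the lattice with basis `b`. -/
noncomputable def latDet {n : ℕ} (b : Fin n → (Fin n → ℝ)) : ℝ :=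
  |(Matrix.of b).det|

/-- A compact convex `o`-symmetric body with nonempty interior. -/
def IsBody {n : ℕ} (K : Set (Fin n → ℝ)) : Prop :=
  IsCompact K ∧ Convex ℝ K ∧ K = -K ∧ (interior K).Nonempty

/-- First successive minimum of `K` w.r.t. the point set `S`. -/
noncomputable def lambda1 {n : ℕ} (K S : Set (Fin n → ℝ)) : ℝ :=
  sInf {l : ℝ | 0 ≤ l ∧ ∃ x ∈ S, x ≠ 0 ∧ x ∈ l • K}

/-- First restricted successive minimum: smallest `l ≥ 0` with `l • K ∩ S ≠ ∅`. -/
noncomputable def lambdaRes {n : ℕ} (K S : Set (Fin n → ℝ)) : ℝ :=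
  sInf {l : ℝ | 0 ≤ l ∧ (l • K ∩ S).Nonempty}

/-- `i`-th successive minimum of `K` w.r.t. the point set `S`. -/
noncomputable def lambdaI {n : ℕ} (i : ℕ) (K S : Set (Fin n → ℝ)) : ℝ :=
  sInf {l : ℝ | 0 ≤ l ∧ i ≤ Module.finrank ℝ (Submodule.span ℝ (l • K ∩ S))}

/-- The (half-open) fundamental parallelepiped of the basis `b`. -/
noncomputable def fundPar {n : ℕ} (b : Fin n → (Fin n → ℝ)) : Set (Fin n → ℝ) :=
  {x | ∃ ρ : Fin n → ℝ, (∀ i, 0 ≤ ρ i ∧ ρ i < 1) ∧ x = ∑ i, ρ i • b i}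

/-- The covering radius of `K` with respect to the point set `L`. -/
noncomputable def covRadius {n : ℕ} (K L : Set (Fin n → ℝ)) : ℝ :=
  sInf {μ : ℝ | 0 < μ ∧ ∀ t : Fin n → ℝ, (({t} + μ • K) ∩ L).Nonempty}

/-- Betke–Henk–Wills: `#(K ∩ Λ) ≤ (2/λ₁(K,Λ) + 1)ⁿ`. -/
lemma zero_mem_interior_aux {n : ℕ} {K : Set (Fin n → ℝ)} (hK : IsBody K) :
    (0 : Fin n → ℝ) ∈ interior K := by
  obtain ⟨hc, hconv, hsymm, ⟨p, hp⟩⟩ := hK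
  have hneg : -p ∈ interior K := by
    have h2 : -interior K = interior K := by
      conv_rhs => rw [hsymm]
      rw [show (-K : Set (Fin n → ℝ)) = (Homeomorph.neg (Fin n → ℝ)) ⁻¹' K from rfl,
        ← Homeomorph.preimage_interior]
      rfl
    rw [← h2]
    exact Set.neg_mem_neg.mpr hp
  have := hconv.interior hp hneg (by norm_num : (0:ℝ) ≤ 1/2)
    (by norm_num : (0:ℝ) ≤ 1/2) (by norm_num)
  simpa [smul_neg] using this


theorem stmt15 {n : ℕ} (K : Set (Fin n → ℝ)) (hK : IsBody K)
    (b : Fin n → (Fin n → ℝ)) (hb : LinearIndependent ℝ b) :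
    ((K ∩ lat b).ncard : ℝ) ≤ (2 / lambda1 K (lat b) + 1) ^ n := by
  classical
  obtain ⟨hcomp, hconv, hsymm, hint⟩ := hK
  rcases Nat.eq_zero_or_pos n with hn | hn
  · subst hn
    rw [pow_zero]
    have hsub : (K ∩ lat b) ⊆ {0} := fun x _ => Subsingleton.elim x 0
    have := Set.ncard_le_ncard hsub (Set.finite_singleton _)
    simp only [Set.ncard_singleton] at this
    exact_mod_cast this
  haveI : Nonempty (Fin n) := ⟨⟨0, hn⟩⟩
  set Λ := lat b with hΛdef
  set lam := lambda1 K Λ with hlamdef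
  set S := {l : ℝ | 0 ≤ l ∧ ∃ x ∈ Λ, x ≠ 0 ∧ x ∈ l • K} with hSdef
  have hlamS : lam = sInf S := rfl
  -- Basis
  have hcard : Fintype.card (Fin n) = Module.finrank ℝ (Fin n → ℝ) := by simp
  set B := basisOfLinearIndependentOfCardEqFinrank hb hcard with hBdef
  have hBb : ⇑B = b := coe_basisOfLinearIndependentOfCardEqFinrank hb hcard
  -- discreteness : separation radius ε
  haveI hdisc : DiscreteTopology (Submodule.span ℤ (Set.range b)) := by
    rw [← hBb]; infer_instance
  obtain ⟨ε, hε, hball⟩ := Metric.isOpen_singleton_iff.mp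
    (isOpen_discrete ({0} : Set (Submodule.span ℤ (Set.range b))))
  have hsep : ∀ x ∈ Λ, x ≠ 0 → ε ≤ ‖x‖ := by
    intro x hx hx0
    by_contra h
    push_neg at h
    have hx' : x ∈ Submodule.span ℤ (Set.range b) := hx
    have := hball ⟨x, hx'⟩ (by rw [Subtype.dist_eq]; simpa [dist_zero_right] using h)
    exact hx0 (by simpa [Subtype.ext_iff] using this)
  -- bound on K
  obtain ⟨R, hR⟩ := isBounded_iff_forall_norm_le.mp hcomp.isBounded
  set R' := max R 1 with hR'def
  have hR'pos : (0:ℝ) < R' := lt_of_lt_of_le one_pos (le_max_right _ _)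
  have hRK : ∀ y ∈ K, ‖y‖ ≤ R' := fun y hy => le_trans (hR y hy) (le_max_left _ _)
  -- S bounded below by ε / R'
  have hSlb : ∀ l ∈ S, ε / R' ≤ l := by
    rintro l ⟨hl0, x, hxΛ, hx0, hxl⟩
    rw [Set.mem_smul_set] at hxl
    obtain ⟨y, hyK, rfl⟩ := hxl
    have h1 : ε ≤ ‖l • y‖ := hsep _ hxΛ hx0
    have h2 : ‖l • y‖ = l * ‖y‖ := by
      rw [norm_smul, Real.norm_eq_abs, abs_of_nonneg hl0]
    have h3 : ε ≤ l * R' := by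
      refine le_trans h1 ?_
      rw [h2]
      exact mul_le_mul_of_nonneg_left (hRK y hyK) hl0
    rw [div_le_iff₀ hR'pos]
    exact h3
  -- S nonempty
  have h0int : (0 : Fin n → ℝ) ∈ interior K :=
    zero_mem_interior_aux ⟨hcomp, hconv, hsymm, hint⟩
  obtain ⟨r, hrpos, hrball⟩ := Metric.mem_nhds_iff.mp (mem_interior_iff_mem_nhds.mp h0int)
  have hrK : Metric.ball (0 : Fin n → ℝ) r ⊆ K := hrball
  have hSne : S.Nonempty := by
    set i0 : Fin n := ⟨0, hn⟩
    have hb0 : b i0 ≠ 0 := hb.ne_zero i0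
    set l : ℝ := (‖b i0‖ + 1) / r with hldef
    have hlpos : 0 < l := by positivity
    refine ⟨l, le_of_lt hlpos, b i0, Submodule.subset_span (Set.mem_range_self i0), hb0, ?_⟩
    rw [Set.mem_smul_set]
    refine ⟨l⁻¹ • b i0, hrK ?_, by rw [smul_smul, mul_inv_cancel₀ (ne_of_gt hlpos), one_smul]⟩
    rw [Metric.mem_ball, dist_zero_right, norm_smul, Real.norm_eq_abs,
      abs_of_nonneg (inv_nonneg.mpr (le_of_lt hlpos))]
    rw [inv_mul_lt_iff₀ hlpos, hldef, div_mul_cancel₀ _ (ne_of_gt hrpos)]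
    linarith
  have hlampos : 0 < lam := by
    have : ε / R' ≤ lam := le_csInf hSne hSlb
    have hpos : 0 < ε / R' := by positivity
    linarith
  -- the modulus m
  set m : ℕ := ⌊2 / lam⌋₊ + 1 with hmdef
  have hm0 : (0:ℝ) < (m:ℝ) := by positivity
  have hmgt : 2 / lam < (m:ℝ) := by
    have := Nat.lt_floor_add_one (2 / lam)
    push_cast [hmdef]
    push_cast at this
    linarith
  have h2m : 2 / (m:ℝ) < lam := by
    rw [div_lt_iff₀ hm0]
    have h4 := (div_lt_iff₀ hlampos).mp hmgt
    linarith
  -- integer coordinates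
  have hrepr : ∀ x ∈ Λ, x = ∑ i, ((round ((B.repr x) i) : ℝ)) • b i := by
    intro x hx
    obtain ⟨c, hc⟩ := (Submodule.mem_span_range_iff_exists_fun ℤ).mp hx
    have hxc : x = ∑ i, (c i : ℝ) • B i := by
      rw [hBb, ← hc]
      congr 1
      ext i
      rw [Int.cast_smul_eq_zsmul]
    have hcoord : ∀ i, (B.repr x) i = (c i : ℝ) := by
      intro i
      conv_lhs => rw [hxc]
      rw [B.repr_sum_self]
    rw [hBb] at hxc
    conv_lhs => rw [hxc]
    refine Finset.sum_congr rfl fun i _ => ?_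
    rw [hcoord i, round_intCast]
  -- the reduction map
  set f : (Fin n → ℝ) → (Fin n → ZMod m) :=
    fun x i => ((round ((B.repr x) i) : ℤ) : ZMod m) with hfdef
  have hinj : Set.InjOn f (K ∩ Λ) := by
    rintro x ⟨hxK, hxΛ⟩ y ⟨hyK, hyΛ⟩ hfxy
    by_contra hne
    set c : Fin n → ℤ := fun i => round ((B.repr x) i) with hcdef
    set d : Fin n → ℤ := fun i => round ((B.repr y) i) with hddef
    have hdvd : ∀ i, (m:ℤ) ∣ (c i - d i) := by
      intro i
      have hcongr : ((c i : ZMod m)) = (d i : ZMod m) := congrFun hfxy i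
      exact (ZMod.intCast_zmod_eq_zero_iff_dvd (c i - d i) m).mp
        (by push_cast; rw [hcongr]; ring)
    choose e he using hdvd
    set z : Fin n → ℝ := ∑ i, ((e i : ℝ)) • b i with hzdef
    have hzΛ : z ∈ Λ := by
      refine (Submodule.mem_span_range_iff_exists_fun ℤ).mpr ⟨e, ?_⟩
      rw [hzdef]
      congr 1
      ext i
      rw [Int.cast_smul_eq_zsmul]
    have hmz : (m:ℝ) • z = x - y := by
      have hx' : x = ∑ i, ((c i : ℤ) : ℝ) • b i := hrepr x hxΛ
      have hy' : y = ∑ i, ((d i : ℤ) : ℝ) • b i := hrepr y hyΛ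
      rw [hzdef, Finset.smul_sum]
      conv_rhs => rw [hx', hy']
      rw [← Finset.sum_sub_distrib]
      refine Finset.sum_congr rfl fun i _ => ?_
      rw [smul_smul, ← sub_smul]
      congr 1
      have h6 : ((c i : ℝ)) - ((d i : ℝ)) = (m : ℝ) * (e i : ℝ) := by
        exact_mod_cast congrArg (fun t : ℤ => (t : ℝ)) (he i)
      linarith
    have hz0 : z ≠ 0 := by
      intro hz
      apply hne
      have h7 : x - y = 0 := by rw [← hmz, hz, smul_zero]
      exact sub_eq_zero.mp h7
    have hnegy : -y ∈ K := by
      rw [hsymm]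
      exact Set.neg_mem_neg.mpr hyK
    have hwK : (2:ℝ)⁻¹ • (x - y) ∈ K := by
      have := hconv hxK hnegy (by norm_num : (0:ℝ) ≤ 1/2)
        (by norm_num : (0:ℝ) ≤ 1/2) (by norm_num)
      convert this using 1
      rw [sub_eq_add_neg, smul_add, smul_neg]
      norm_num
    have hzmem : z ∈ (2 / (m:ℝ)) • K := by
      rw [Set.mem_smul_set]
      refine ⟨(2:ℝ)⁻¹ • (x - y), hwK, ?_⟩
      rw [smul_smul, ← hmz, smul_smul]
      rw [show (2 / (m:ℝ)) * 2⁻¹ * (m:ℝ) = 1 by field_simp]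
      rw [one_smul]
    have hmem : (2 / (m:ℝ)) ∈ S := ⟨by positivity, z, hzΛ, hz0, hzmem⟩
    have : lam ≤ 2 / (m:ℝ) := csInf_le ⟨0, fun l hl => hl.1⟩ hmem
    linarith
  -- counting
  haveI : NeZero m := ⟨Nat.succ_ne_zero _⟩
  have hcount : (K ∩ Λ).ncard ≤ m ^ n := by
    have h5 := Set.ncard_le_ncard_of_injOn f (fun a _ => Set.mem_univ (f a)) hinj Set.finite_univ
    rwa [Set.ncard_univ, Nat.card_eq_fintype_card, Fintype.card_fun,
      ZMod.card, Fintype.card_fin] at h5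
  calc ((K ∩ Λ).ncard : ℝ) ≤ (m:ℝ)^n := by exact_mod_cast hcount
    _ ≤ (2 / lam + 1)^n := by
        apply pow_le_pow_left₀ (le_of_lt hm0)
        have hfl : (⌊2/lam⌋₊ : ℝ) ≤ 2/lam := Nat.floor_le (by positivity)
        push_cast [hmdef]
        linarith
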